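/- Let G be a finite nonempty type with cardinality n, let 𝒵 be a finite index type, let (p_z)_{z ∈ 𝒵} be nonnegative real weights with ∑_z p_z = 1, and for each z ∈ 𝒵 let q_z be a probability mass function on G. Let π denote the uniform distribution on G, assigning mass 1/n to each element. Then 2 · (∑_{z ∈ 𝒵} p_z · d_TV(q_z, π))² ≤ n · ∑_{z ∈ 𝒵} p_z · ∑_{x ∈ G} q_z(x)² − 1. -/

import Mathlib

/-- modified L² bound on averaged total-variation distance to uniform:
`2 (∑_z p_z d_TV(q_z, π))² ≤ n ∑_z p_z ∑_x q_z(x)² − 1`. -/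
theorem stmt_5 {G : Type*} [Fintype G] [Nonempty G] {Z : Type*} [Fintype Z]
    (n : ℕ) (hn : Fintype.card G = n)
    (p : Z → ℝ) (hp : ∀ z, 0 ≤ p z) (hpsum : ∑ z, p z = 1)
    (q : Z → G → ℝ) (hq : ∀ z x, 0 ≤ q z x) (hqsum : ∀ z, ∑ x, q z x = 1) :
    2 * (∑ z, p z * ((1 / 2) * ∑ x, |q z x - 1 / n|)) ^ 2
      ≤ n * (∑ z, p z * ∑ x, (q z x) ^ 2) - 1 := by
  have hn1 : 0 < n := hn ▸ Fintype.card_pos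
  have hnR : (0:ℝ) < n := by exact_mod_cast hn1
  set a : Z → ℝ := fun z => (1/2) * ∑ x, |q z x - 1/(n:ℝ)| with ha
  have ha0 : ∀ z, 0 ≤ a z := by
    intro z
    have : (0:ℝ) ≤ ∑ x, |q z x - 1/(n:ℝ)| :=
      Finset.sum_nonneg fun x _ => abs_nonneg _
    positivity
  have key : ∀ z, 2 * (a z)^2 ≤ (n:ℝ) * (∑ x, (q z x)^2) - 1 := by
    intro z
    have hCS : (∑ x, |q z x - 1/(n:ℝ)|)^2 ≤ (n:ℝ) * ∑ x, (q z x - 1/(n:ℝ))^2 := by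
      have h := sq_sum_le_card_mul_sum_sq
        (s := (Finset.univ : Finset G)) (f := fun x => |q z x - 1/(n:ℝ)|)
      simpa [Finset.card_univ, hn, sq_abs] using h
    have hsum : ∑ x, (q z x - 1/(n:ℝ))^2 = (∑ x, (q z x)^2) - 1/(n:ℝ) := by
      have he : ∀ x ∈ (Finset.univ : Finset G),
          (q z x - 1/(n:ℝ))^2 = (q z x)^2 - (2/(n:ℝ)) * q z x + 1/(n:ℝ)^2 := by
        intro x _; ring
      rw [Finset.sum_congr rfl he, Finset.sum_add_distrib, Finset.sum_sub_distrib,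
        ← Finset.mul_sum, hqsum z, Finset.sum_const, Finset.card_univ, hn]
      field_simp
      ring_nf
      rw [← mul_pow, mul_inv_cancel₀ hnR.ne']; ring
    rw [hsum] at hCS
    have hT : (∑ x, |q z x - 1/(n:ℝ)|)^2 ≤ (n:ℝ) * (∑ x, (q z x)^2) - 1 := by
      have : (n:ℝ) * ((∑ x, (q z x)^2) - 1/(n:ℝ)) = (n:ℝ) * (∑ x, (q z x)^2) - 1 := by
        field_simp
      linarith [hCS, this ▸ hCS]
    have hX0 : (0:ℝ) ≤ (∑ x, |q z x - 1/(n:ℝ)|)^2 := sq_nonneg _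
    simp only [ha]
    nlinarith [hT, hX0]
  -- Jensen / Cauchy-Schwarz in z
  have hJ : (∑ z, p z * a z)^2 ≤ ∑ z, p z * (a z)^2 := by
    have h := Finset.sum_mul_sq_le_sq_mul_sq (Finset.univ : Finset Z)
      (fun z => Real.sqrt (p z)) (fun z => Real.sqrt (p z) * a z)
    have e1 : ∀ z, Real.sqrt (p z) * (Real.sqrt (p z) * a z) = p z * a z := by
      intro z
      rw [← mul_assoc, Real.mul_self_sqrt (hp z)]
    have e2 : ∀ z, Real.sqrt (p z) ^ 2 = p z := fun z => Real.sq_sqrt (hp z)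
    have e3 : ∀ z, (Real.sqrt (p z) * a z) ^ 2 = p z * (a z)^2 := by
      intro z; rw [mul_pow, e2]
    calc (∑ z, p z * a z)^2
        = (∑ z, Real.sqrt (p z) * (Real.sqrt (p z) * a z))^2 := by
          simp_rw [e1]
      _ ≤ (∑ z, Real.sqrt (p z) ^ 2) * ∑ z, (Real.sqrt (p z) * a z)^2 := h
      _ = ∑ z, p z * (a z)^2 := by simp_rw [e2, e3, hpsum, one_mul]
  have hstep : ∑ z, p z * (2 * (a z)^2) ≤ ∑ z, p z * ((n:ℝ) * (∑ x, (q z x)^2) - 1) :=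
    Finset.sum_le_sum fun z _ => mul_le_mul_of_nonneg_left (key z) (hp z)
  have hrhs : ∑ z, p z * ((n:ℝ) * (∑ x, (q z x)^2) - 1)
      = (n:ℝ) * (∑ z, p z * ∑ x, (q z x)^2) - 1 := by
    have he : ∑ z, p z * ((n:ℝ) * (∑ x, (q z x)^2) - 1)
        = ∑ z, ((n:ℝ) * (p z * ∑ x, (q z x)^2) - p z) := by
      congr 1; ext z; ring
    rw [he, Finset.sum_sub_distrib, ← Finset.mul_sum, hpsum]
  have hlhs : ∑ z, p z * (2 * (a z)^2) = 2 * ∑ z, p z * (a z)^2 := by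
    rw [Finset.mul_sum]; congr 1; ext z; ring
  have : 2 * (∑ z, p z * a z)^2 ≤ 2 * ∑ z, p z * (a z)^2 := by linarith
  calc 2 * (∑ z, p z * ((1 / 2) * ∑ x, |q z x - 1 / (n:ℝ)|)) ^ 2
      = 2 * (∑ z, p z * a z)^2 := by simp [ha]
    _ ≤ 2 * ∑ z, p z * (a z)^2 := this
    _ = ∑ z, p z * (2 * (a z)^2) := hlhs.symm
    _ ≤ ∑ z, p z * ((n:ℝ) * (∑ x, (q z x)^2) - 1) := hstep
    _ = (n:ℝ) * (∑ z, p z * ∑ x, (q z x)^2) - 1 := hrhs
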